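/- A function g ∈ S^30 is contained in S^29 if and only if φ(g) = 0, where φ(g) = Σ_{∅⊊S⊊[4]_0} (−1)^{|S|} g(r_S). -/

import Mathlib

open Finset

set_option maxRecDepth 10000

/-- Extend `x ∈ ℝ⁴` by the coordinate `x₀ = 0`, giving a vector indexed by `[4]₀ = {0,…,4}`. -/
noncomputable def ext (x : Fin 4 → ℝ) : Fin 5 → ℝ := Fin.cases 0 x

/-- The cell `C_π = {x ∈ ℝ⁴ : x_{π(0)} ≤ x_{π(1)} ≤ x_{π(2)} ≤ x_{π(3)} ≤ x_{π(4)}}` of the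
hyperplane arrangement `H` (with the convention `x₀ = 0`). -/
def cell (π : Equiv.Perm (Fin 5)) : Set (Fin 4 → ℝ) :=
  {x | ∀ i : Fin 4, ext x (π i.castSucc) ≤ ext x (π i.succ)}

/-- `g : ℝ⁴ → ℝ` is `H`-conforming: it is a positively homogeneous continuous function that
is linear on each cell `C_π` of the arrangement `H` (hence continuous piecewise linear). -/
def Hconforming (g : (Fin 4 → ℝ) → ℝ) : Prop :=
  Continuous g ∧ (∀ (lam : ℝ), 0 ≤ lam → ∀ x, g (lam • x) = lam * g x) ∧
    ∀ π : Equiv.Perm (Fin 5), ∃ a : Fin 4 → ℝ, ∀ x ∈ cell π, g x = ∑ j, a j * x j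

/-- The generator `r_S` of the ray `R_S`, for `∅ ⊊ S ⊊ [4]₀`: the 0/1 indicator vector of
the complement of `S` if `0 ∈ S`, and the 0/(−1) indicator vector of `S` if `0 ∉ S`. -/
noncomputable def ray (S : Finset (Fin 5)) : Fin 4 → ℝ := fun j =>
  if (0 : Fin 5) ∈ S then (if j.succ ∈ S then 0 else 1) else (if j.succ ∈ S then -1 else 0)

/-- `g_M(x) = max_{i ∈ M} x_i` (with the convention `x₀ = 0`; junk value `0` if `M = ∅`). -/
noncomputable def gM (M : Finset (Fin 5)) (x : Fin 4 → ℝ) : ℝ :=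
  if hM : M.Nonempty then M.sup' hM (ext x) else 0

lemma ext_zero (x : Fin 4 → ℝ) : ext x 0 = 0 := rfl
lemma ext_succ (x : Fin 4 → ℝ) (j : Fin 4) : ext x j.succ = x j := Fin.cases_succ j

lemma ext_ray (S : Finset (Fin 5)) (i : Fin 5) :
    ext (ray S) i = (if (0:Fin 5) ∈ S then (1:ℝ) else 0) - (if i ∈ S then 1 else 0) := by
  induction i using Fin.cases with
  | zero => rw [ext_zero]; split_ifs <;> norm_num
  | succ j => rw [ext_succ, ray]; split_ifs <;> norm_num

def Sk (π : Equiv.Perm (Fin 5)) (k : Fin 4) : Finset (Fin 5) :=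
  Finset.univ.filter (fun i => π.symm i ≤ k.castSucc)

noncomputable def del (x : Fin 4 → ℝ) (π : Equiv.Perm (Fin 5)) (k : Fin 4) : ℝ :=
  ext x (π k.succ) - ext x (π k.castSucc)

lemma mem_Sk {π : Equiv.Perm (Fin 5)} {k : Fin 4} {i : Fin 5} :
    i ∈ Sk π k ↔ π.symm i ≤ k.castSucc := by simp [Sk]

lemma sum_del_ite (x : Fin 4 → ℝ) (π : Equiv.Perm (Fin 5)) (m : Fin 5) :
    ∑ k : Fin 4, del x π k * (if m ≤ k.castSucc then (1:ℝ) else 0)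
      = ext x (π 4) - ext x (π m) := by
  have c0 : Fin.castSucc (0:Fin 4) = (0:Fin 5) := by decide
  have c1 : Fin.castSucc (1:Fin 4) = (1:Fin 5) := by decide
  have c2 : Fin.castSucc (2:Fin 4) = (2:Fin 5) := by decide
  have c3 : Fin.castSucc (3:Fin 4) = (3:Fin 5) := by decide
  have s0 : Fin.succ (0:Fin 4) = (1:Fin 5) := by decide
  have s1 : Fin.succ (1:Fin 4) = (2:Fin 5) := by decide
  have s2 : Fin.succ (2:Fin 4) = (3:Fin 5) := by decide
  have s3 : Fin.succ (3:Fin 4) = (4:Fin 5) := by decide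
  have e0 : ∀ (h : 0 < 5), (⟨0, h⟩ : Fin 5) = 0 := fun _ => rfl
  have e1 : ∀ (h : 1 < 5), (⟨1, h⟩ : Fin 5) = 1 := fun _ => rfl
  have e2 : ∀ (h : 2 < 5), (⟨2, h⟩ : Fin 5) = 2 := fun _ => rfl
  have e3 : ∀ (h : 3 < 5), (⟨3, h⟩ : Fin 5) = 3 := fun _ => rfl
  have e4 : ∀ (h : 4 < 5), (⟨4, h⟩ : Fin 5) = 4 := fun _ => rfl
  fin_cases m <;>
    · simp only [Fin.sum_univ_four, del, c0, c1, c2, c3, s0, s1, s2, s3]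
      simp (config := { decide := true }) only [e0, e1, e2, e3, e4]
      norm_num
      try ring

lemma sum_del_ray (x : Fin 4 → ℝ) (π : Equiv.Perm (Fin 5)) (i : Fin 5) :
    ∑ k : Fin 4, del x π k * ext (ray (Sk π k)) i = ext x i := by
  have h : ∀ k : Fin 4, ext (ray (Sk π k)) i
      = (if π.symm 0 ≤ k.castSucc then (1:ℝ) else 0)
        - (if π.symm i ≤ k.castSucc then 1 else 0) := by
    intro k
    rw [ext_ray]
    congr 1 <;> exact if_congr mem_Sk rfl rfl
  calc ∑ k : Fin 4, del x π k * ext (ray (Sk π k)) i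
      = ∑ k : Fin 4, (del x π k * (if π.symm 0 ≤ k.castSucc then (1:ℝ) else 0)
          - del x π k * (if π.symm i ≤ k.castSucc then 1 else 0)) := by
        refine Finset.sum_congr rfl fun k _ => ?_
        rw [h k]; ring
    _ = (ext x (π 4) - ext x (π (π.symm 0))) - (ext x (π 4) - ext x (π (π.symm i))) := by
        rw [Finset.sum_sub_distrib, sum_del_ite, sum_del_ite]
    _ = ext x i := by rw [Equiv.apply_symm_apply, Equiv.apply_symm_apply, ext_zero]; ring

lemma ray_Sk_mem_cell (π : Equiv.Perm (Fin 5)) (k : Fin 4) : ray (Sk π k) ∈ cell π := by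
  intro i
  rw [ext_ray, ext_ray]
  simp only [mem_Sk, Equiv.symm_apply_apply]
  have himp : i.succ ≤ k.castSucc → i.castSucc ≤ k.castSucc :=
    fun h => le_trans (Fin.castSucc_le_succ i) h
  refine sub_le_sub_left ?_ _
  split_ifs with h1 h2 <;> norm_num
  exact absurd (himp h1) h2

lemma decomp (h : (Fin 4 → ℝ) → ℝ) (a : Fin 4 → ℝ) (π : Equiv.Perm (Fin 5))
    (hlin : ∀ y ∈ cell π, h y = ∑ j, a j * y j) (x : Fin 4 → ℝ) (hx : x ∈ cell π) :
    h x = ∑ k : Fin 4, del x π k * h (ray (Sk π k)) := by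
  have key : ∀ j : Fin 4, x j = ∑ k : Fin 4, del x π k * ray (Sk π k) j := by
    intro j
    have h2 := sum_del_ray x π j.succ
    rw [ext_succ] at h2
    refine h2.symm.trans (Finset.sum_congr rfl fun k _ => ?_)
    rw [ext_succ]
  rw [hlin x hx]
  calc ∑ j, a j * x j
      = ∑ j, ∑ k : Fin 4, a j * (del x π k * ray (Sk π k) j) := by
        refine Finset.sum_congr rfl fun j _ => ?_
        rw [key j, Finset.mul_sum]
    _ = ∑ k : Fin 4, ∑ j, a j * (del x π k * ray (Sk π k) j) := Finset.sum_comm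
    _ = ∑ k : Fin 4, del x π k * h (ray (Sk π k)) := by
        refine Finset.sum_congr rfl fun k _ => ?_
        rw [hlin _ (ray_Sk_mem_cell π k), Finset.mul_sum]
        exact Finset.sum_congr rfl fun j _ => by ring

lemma exists_cell (x : Fin 4 → ℝ) : ∃ π : Equiv.Perm (Fin 5), x ∈ cell π :=
  ⟨Tuple.sort (ext x), fun i =>
    Tuple.monotone_sort (ext x) (Fin.castSucc_le_succ i)⟩

lemma monotone_of_cell {x : Fin 4 → ℝ} {π : Equiv.Perm (Fin 5)} (hx : x ∈ cell π) :
    Monotone (fun m => ext x (π m)) :=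
  Fin.monotone_iff_le_succ.2 hx

lemma gM_linear (M : Finset (Fin 5)) (hM : M.Nonempty) (π : Equiv.Perm (Fin 5)) :
    ∃ a : Fin 4 → ℝ, ∀ x ∈ cell π, gM M x = ∑ j, a j * x j := by
  set m := M.sup' hM (fun i => π.symm i) with hm
  refine ⟨fun j => if π m = j.succ then 1 else 0, fun x hx => ?_⟩
  have hmono := monotone_of_cell hx
  have h1 : gM M x = ext x (π m) := by
    rw [gM, dif_pos hM]
    apply le_antisymm
    · refine Finset.sup'_le hM _ fun i hi => ?_
      have h2 : π.symm i ≤ m := Finset.le_sup' _ hi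
      have h3 := hmono h2
      simpa using h3
    · obtain ⟨i, hi, hieq⟩ := Finset.exists_mem_eq_sup' hM (fun i => π.symm i)
      have h4 : ext x (π m) = ext x i := by rw [← hm] at hieq; rw [hieq]; simp
      rw [h4]
      exact Finset.le_sup' _ hi
  rw [h1]
  rcases Fin.eq_zero_or_eq_succ (π m) with h0 | ⟨j0, hj0⟩
  · rw [h0, ext_zero]
    refine (Finset.sum_eq_zero fun j _ => ?_).symm
    exact mul_eq_zero_of_left (if_neg (Ne.symm (Fin.succ_ne_zero j))) (x j)
  · rw [hj0, ext_succ]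
    have key2 : ∀ j : Fin 4, (if j0.succ = j.succ then (1:ℝ) else 0) * x j
        = if j0 = j then x j else 0 := by
      intro j
      by_cases h : j0 = j
      · rw [h, if_pos rfl, if_pos rfl, one_mul]
      · rw [if_neg (fun hc => h (Fin.succ_injective _ hc)), if_neg h, zero_mul]
    refine Eq.symm (((Finset.sum_congr rfl fun j _ => key2 j)).trans ?_)
    simp

lemma gM_ray (M S : Finset (Fin 5)) (hM : M.Nonempty) :
    gM M (ray S) = (if (0:Fin 5) ∈ S then (1:ℝ) else 0) - (if M ⊆ S then 1 else 0) := by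
  rw [gM, dif_pos hM]
  by_cases hMS : M ⊆ S
  · rw [if_pos hMS]
    apply le_antisymm
    · refine Finset.sup'_le hM _ fun i hi => ?_
      rw [ext_ray, if_pos (hMS hi)]
    · obtain ⟨i, hi⟩ := hM
      have := Finset.le_sup' (ext (ray S)) hi
      rwa [ext_ray, if_pos (hMS hi)] at this
  · rw [if_neg hMS]
    obtain ⟨i0, hi0M, hi0S⟩ := Finset.not_subset.1 hMS
    apply le_antisymm
    · refine Finset.sup'_le hM _ fun i hi => ?_
      rw [ext_ray]
      split_ifs <;> norm_num
    · have := Finset.le_sup' (ext (ray S)) hi0M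
      rw [ext_ray, if_neg hi0S] at this
      simpa only [sub_zero] using this

noncomputable def bcoef (v : Finset (Fin 5) → ℝ) (T : Finset (Fin 5)) : ℝ :=
  (-1)^T.card * ∑ T' ∈ T.powerset, (-1)^T'.card * v T'

lemma mob_inner_sum (S T' : Finset (Fin 5)) :
    (∑ T ∈ S.powerset, if T' ⊆ T then (-1 : ℝ) ^ T.card else 0)
      = if T' = S then (-1 : ℝ) ^ S.card else 0 := by
  have h : ∀ S T' : Finset (Fin 5),
      (∑ T ∈ S.powerset, if T' ⊆ T then (-1 : ℤ) ^ T.card else 0)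
        = if T' = S then (-1 : ℤ) ^ S.card else 0 := by decide
  have h2 := congrArg (Int.cast : ℤ → ℝ) (h S T')
  push_cast [apply_ite (Int.cast : ℤ → ℝ)] at h2
  exact h2

lemma mobius (v : Finset (Fin 5) → ℝ) (S : Finset (Fin 5)) :
    ∑ T ∈ S.powerset, bcoef v T = v S := by
  have step1 : ∀ T ∈ S.powerset, bcoef v T
      = ∑ T' ∈ S.powerset, if T' ⊆ T then ((-1:ℝ)^T'.card * v T') * (-1:ℝ)^T.card else 0 := by
    intro T hT
    have hTS : T ⊆ S := Finset.mem_powerset.1 hT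
    have hps : T.powerset = S.powerset.filter (fun T' => T' ⊆ T) := by
      ext T'
      simp only [Finset.mem_filter, Finset.mem_powerset]
      exact ⟨fun h => ⟨h.trans hTS, h⟩, fun h => h.2⟩
    rw [bcoef, Finset.mul_sum, hps, Finset.sum_filter]
    refine Finset.sum_congr rfl fun T' _ => ?_
    split_ifs <;> ring
  calc ∑ T ∈ S.powerset, bcoef v T
      = ∑ T ∈ S.powerset, ∑ T' ∈ S.powerset,
          (if T' ⊆ T then ((-1:ℝ)^T'.card * v T') * (-1:ℝ)^T.card else 0) :=
        Finset.sum_congr rfl step1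
    _ = ∑ T' ∈ S.powerset, ∑ T ∈ S.powerset,
          (if T' ⊆ T then ((-1:ℝ)^T'.card * v T') * (-1:ℝ)^T.card else 0) := Finset.sum_comm
    _ = ∑ T' ∈ S.powerset, ((-1:ℝ)^T'.card * v T')
          * ∑ T ∈ S.powerset, (if T' ⊆ T then (-1:ℝ)^T.card else 0) := by
        refine Finset.sum_congr rfl fun T' _ => ?_
        rw [Finset.mul_sum]
        refine Finset.sum_congr rfl fun T _ => ?_
        split_ifs <;> ring
    _ = ∑ T' ∈ S.powerset, ((-1:ℝ)^T'.card * v T')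
          * (if T' = S then (-1:ℝ)^S.card else 0) :=
        Finset.sum_congr rfl fun T' _ => by rw [mob_inner_sum]
    _ = ((-1:ℝ)^S.card * v S) * (-1:ℝ)^S.card := by
        rw [Finset.sum_eq_single_of_mem S (Finset.mem_powerset.2 (Finset.Subset.refl S))
          (fun b _ hb => by rw [if_neg hb, mul_zero]), if_pos rfl]
    _ = v S := by
        rw [mul_comm ((-1:ℝ)^S.card) (v S), mul_assoc, ← mul_pow]
        norm_num
lemma cast_sum_ite (A : Finset (Finset (Fin 5))) (P : Finset (Fin 5) → Prop) [DecidablePred P] :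
    (∑ S ∈ A, (-1:ℝ)^S.card * (if P S then 1 else 0))
      = ((∑ S ∈ A, (-1:ℤ)^S.card * (if P S then 1 else 0) : ℤ) : ℝ) := by
  push_cast [apply_ite (Int.cast : ℤ → ℝ)]
  try rfl

lemma sum_D_zero_mem :
    (∑ S ∈ Finset.univ.filter (fun S : Finset (Fin 5) => S.Nonempty ∧ S ≠ Finset.univ),
      (-1:ℝ)^S.card * (if (0 : Fin 5) ∈ S then 1 else 0)) = 1 := by
  rw [cast_sum_ite]
  norm_cast

lemma sum_D_subset (M : Finset (Fin 5)) (hM : M.Nonempty) (hMU : M ≠ Finset.univ) :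
    (∑ S ∈ Finset.univ.filter (fun S : Finset (Fin 5) => S.Nonempty ∧ S ≠ Finset.univ),
      (-1:ℝ)^S.card * (if M ⊆ S then 1 else 0)) = 1 := by
  rw [cast_sum_ite]
  norm_cast
  revert hM hMU
  revert M
  decide

lemma vanish (M : Finset (Fin 5)) (hM : M.Nonempty) (hMU : M ≠ Finset.univ) :
    (∑ S ∈ Finset.univ.filter (fun S : Finset (Fin 5) => S.Nonempty ∧ S ≠ Finset.univ),
      (-1:ℝ)^S.card * gM M (ray S)) = 0 := by
  have h1 : ∀ S : Finset (Fin 5),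
      (-1:ℝ)^S.card * gM M (ray S)
        = (-1:ℝ)^S.card * (if (0 : Fin 5) ∈ S then 1 else 0)
          - (-1:ℝ)^S.card * (if M ⊆ S then 1 else 0) := by
    intro S
    rw [gM_ray M S hM]
    ring
  rw [Finset.sum_congr rfl fun S _ => h1 S, Finset.sum_sub_distrib,
    sum_D_zero_mem, sum_D_subset M hM hMU]
  norm_num

/-- Membership in `S²⁹`, the span of the 29 functions `g_M` with `M ∉ {∅,{0}}`, `M ⊊ [4]₀`. -/
def InS29 (g : (Fin 4 → ℝ) → ℝ) : Prop :=
  ∃ c : Finset (Fin 5) → ℝ,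
    (∀ M, ¬(M.Nonempty ∧ M ≠ {0} ∧ M ≠ Finset.univ) → c M = 0) ∧
    ∀ x, g x = ∑ M : Finset (Fin 5), c M * gM M x

/-- The linear functional `φ(g) = Σ_{∅ ⊊ S ⊊ [4]₀} (−1)^{|S|} g(r_S)`. -/
noncomputable def phi (g : (Fin 4 → ℝ) → ℝ) : ℝ :=
  ∑ S ∈ Finset.univ.filter (fun S : Finset (Fin 5) => S.Nonempty ∧ S ≠ Finset.univ),
    (-1 : ℝ) ^ S.card * g (ray S)

/-- a function `g ∈ S³⁰` is contained in `S²⁹` if and only if `φ(g) = 0`. -/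
theorem mem_s29_iff_phi_eq_zero (g : (Fin 4 → ℝ) → ℝ) (hg : Hconforming g) :
    InS29 g ↔ phi g = 0 := by
  constructor
  · rintro ⟨c, hc0, hcg⟩
    rw [phi]
    calc ∑ S ∈ Finset.univ.filter (fun S : Finset (Fin 5) => S.Nonempty ∧ S ≠ Finset.univ),
          (-1:ℝ)^S.card * g (ray S)
        = ∑ S ∈ Finset.univ.filter (fun S : Finset (Fin 5) => S.Nonempty ∧ S ≠ Finset.univ),
            ∑ M : Finset (Fin 5), (-1:ℝ)^S.card * (c M * gM M (ray S)) := by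
          refine Finset.sum_congr rfl fun S _ => ?_
          rw [hcg (ray S), Finset.mul_sum]
      _ = ∑ M : Finset (Fin 5),
            ∑ S ∈ Finset.univ.filter (fun S : Finset (Fin 5) => S.Nonempty ∧ S ≠ Finset.univ),
              (-1:ℝ)^S.card * (c M * gM M (ray S)) := Finset.sum_comm
      _ = 0 := by
          refine Finset.sum_eq_zero fun M _ => ?_
          by_cases hM : M.Nonempty ∧ M ≠ {0} ∧ M ≠ Finset.univ
          · have h2 : ∀ S : Finset (Fin 5), (-1:ℝ)^S.card * (c M * gM M (ray S))
                = c M * ((-1:ℝ)^S.card * gM M (ray S)) := fun S => by ring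
            rw [Finset.sum_congr rfl fun S _ => h2 S, ← Finset.mul_sum,
              vanish M hM.1 hM.2.2, mul_zero]
          · refine Finset.sum_eq_zero fun S _ => ?_
            rw [hc0 M hM, zero_mul, mul_zero]
  · intro hphi
    obtain ⟨hcont, hhom, hlin⟩ := hg
    have hg0 : g 0 = 0 := by
      have h := hhom 0 le_rfl 0
      simpa using h
    have hve : g (ray ∅) = 0 := by
      have h : ray ∅ = 0 := funext fun j => by simp [ray]
      rw [h, hg0]
    have hvu : g (ray Finset.univ) = 0 := by
      have h : ray Finset.univ = 0 := funext fun j => by simp [ray]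
      rw [h, hg0]
    set v : Finset (Fin 5) → ℝ := fun S => g (ray S) with hv
    have hsplit : ∀ f : Finset (Fin 5) → ℝ,
        (∑ T : Finset (Fin 5), f T)
          = (∑ T ∈ Finset.univ.filter
              (fun S : Finset (Fin 5) => S.Nonempty ∧ S ≠ Finset.univ), f T)
            + (f ∅ + f Finset.univ) := by
      intro f
      have hfilter : Finset.univ.filter
          (fun S : Finset (Fin 5) => ¬(S.Nonempty ∧ S ≠ Finset.univ))
          = {∅, Finset.univ} := by decide
      rw [← Finset.sum_filter_add_sum_filter_not Finset.univ
        (fun S : Finset (Fin 5) => S.Nonempty ∧ S ≠ Finset.univ) f, hfilter,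
        Finset.sum_pair (by decide : (∅ : Finset (Fin 5)) ≠ Finset.univ)]
    have hbU : bcoef v Finset.univ = 0 := by
      rw [bcoef, Finset.powerset_univ, hsplit (fun T => (-1:ℝ)^T.card * v T)]
      have h : (∑ T ∈ Finset.univ.filter
          (fun S : Finset (Fin 5) => S.Nonempty ∧ S ≠ Finset.univ),
            (-1:ℝ)^T.card * v T) = phi g := rfl
      rw [h, hphi]
      simp [hv, hve, hvu]
    have hbE : bcoef v ∅ = 0 := by
      simp [bcoef, hv, hve]
    -- sum of bcoef over all subsets
    have hall : (∑ T : Finset (Fin 5), bcoef v T) = 0 := by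
      rw [← Finset.powerset_univ, mobius v Finset.univ]
      simp [hv, hvu]
    have hQE : Finset.univ.filter
        (fun M : Finset (Fin 5) => M.Nonempty ∧ M ≠ {0} ∧ M ≠ Finset.univ)
        = Finset.univ \ {∅, {0}, Finset.univ} := by decide
    have hEsum : ∀ f : Finset (Fin 5) → ℝ,
        (∑ T ∈ ({∅, {0}, Finset.univ} : Finset (Finset (Fin 5))), f T)
          = f ∅ + f {0} + f Finset.univ := by
      intro f
      rw [Finset.sum_insert (by decide), Finset.sum_insert (by decide),
        Finset.sum_singleton, add_assoc]
    have hQsum : (∑ M ∈ Finset.univ.filter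
        (fun M : Finset (Fin 5) => M.Nonempty ∧ M ≠ {0} ∧ M ≠ Finset.univ), bcoef v M)
        = -(bcoef v {0}) := by
      rw [hQE, Finset.sum_sdiff_eq_sub (Finset.subset_univ _), hEsum, hall, hbE, hbU]
      ring
    refine ⟨fun M => if M.Nonempty ∧ M ≠ {0} ∧ M ≠ Finset.univ
      then -(bcoef v M) else 0, fun M hM => if_neg hM, ?_⟩
    have hmatch : ∀ S : Finset (Fin 5), S.Nonempty → S ≠ Finset.univ →
        (∑ M : Finset (Fin 5),
          (if M.Nonempty ∧ M ≠ {0} ∧ M ≠ Finset.univ then -(bcoef v M) else 0)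
            * gM M (ray S)) = g (ray S) := by
      intro S hSne hSU
      have hstep1 : (∑ M : Finset (Fin 5),
          (if M.Nonempty ∧ M ≠ {0} ∧ M ≠ Finset.univ then -(bcoef v M) else 0)
            * gM M (ray S))
          = ∑ M ∈ Finset.univ.filter
              (fun M : Finset (Fin 5) => M.Nonempty ∧ M ≠ {0} ∧ M ≠ Finset.univ),
                -(bcoef v M) * gM M (ray S) := by
        rw [← Finset.sum_subset (Finset.subset_univ _) (fun M _ hM => by
          have hM' : ¬(M.Nonempty ∧ M ≠ {0} ∧ M ≠ Finset.univ) := by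
            intro hc
            exact hM (Finset.mem_filter.2 ⟨Finset.mem_univ M, hc⟩)
          rw [if_neg hM', zero_mul])]
        refine Finset.sum_congr rfl fun M hM => ?_
        rw [if_pos (Finset.mem_filter.1 hM).2]
      rw [hstep1]
      have hstep2 : ∀ M ∈ Finset.univ.filter
          (fun M : Finset (Fin 5) => M.Nonempty ∧ M ≠ {0} ∧ M ≠ Finset.univ),
            -(bcoef v M) * gM M (ray S)
          = (if M ⊆ S then bcoef v M else 0)
            - bcoef v M * (if (0 : Fin 5) ∈ S then (1:ℝ) else 0) := by
        intro M hM
        have hMne : M.Nonempty := (Finset.mem_filter.1 hM).2.1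
        rw [gM_ray M S hMne]
        split_ifs <;> ring
      rw [Finset.sum_congr rfl hstep2, Finset.sum_sub_distrib, ← Finset.sum_mul, hQsum]
      have hsub : (∑ M ∈ Finset.univ.filter
          (fun M : Finset (Fin 5) => M.Nonempty ∧ M ≠ {0} ∧ M ≠ Finset.univ),
            if M ⊆ S then bcoef v M else 0)
          = v S - (if (0 : Fin 5) ∈ S then bcoef v {0} else 0) := by
        have huniv : (∑ M : Finset (Fin 5), if M ⊆ S then bcoef v M else 0) = v S := by
          have hfil : Finset.univ.filter (fun M : Finset (Fin 5) => M ⊆ S)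
              = S.powerset := by
            ext T; simp
          rw [← Finset.sum_filter, hfil, mobius]
        have hQE' : (∑ M ∈ Finset.univ.filter
            (fun M : Finset (Fin 5) => M.Nonempty ∧ M ≠ {0} ∧ M ≠ Finset.univ),
              if M ⊆ S then bcoef v M else 0)
            = (∑ M : Finset (Fin 5), if M ⊆ S then bcoef v M else 0)
              - ∑ M ∈ ({∅, {0}, Finset.univ} : Finset (Finset (Fin 5))),
                  (if M ⊆ S then bcoef v M else 0) := by
          rw [hQE, Finset.sum_sdiff_eq_sub (Finset.subset_univ _)]
        rw [hQE', huniv, hEsum]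
        have h1 : (if (∅ : Finset (Fin 5)) ⊆ S then bcoef v ∅ else 0) = 0 := by
          rw [if_pos (Finset.empty_subset S), hbE]
        have h2 : (if (Finset.univ : Finset (Fin 5)) ⊆ S then bcoef v Finset.univ else 0)
            = 0 := by
          split_ifs <;> simp [hbU]
        have h3 : (if ({0} : Finset (Fin 5)) ⊆ S then bcoef v {0} else 0)
            = (if (0 : Fin 5) ∈ S then bcoef v {0} else 0) := by
          simp [Finset.singleton_subset_iff]
        rw [h1, h2, h3]
        ring
      rw [hsub]
      by_cases h0S : (0 : Fin 5) ∈ S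
      · rw [if_pos h0S, if_pos h0S]; show _ = v S; ring
      · rw [if_neg h0S, if_neg h0S]; show _ = v S; ring
    -- final pointwise identity
    intro x
    obtain ⟨π, hx⟩ := exists_cell x
    obtain ⟨a, ha⟩ := hlin π
    have hSk : ∀ k : Fin 4, (Sk π k).Nonempty ∧ Sk π k ≠ Finset.univ := by
      intro k
      constructor
      · exact ⟨π 0, mem_Sk.2 (by rw [Equiv.symm_apply_apply]; exact Fin.zero_le _)⟩
      · intro hEq
        have h4 : π 4 ∈ Sk π k := hEq ▸ Finset.mem_univ (π 4)
        have h5 := mem_Sk.1 h4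
        rw [Equiv.symm_apply_apply, Fin.le_def] at h5
        have h6 : ((4 : Fin 5) : ℕ) = 4 := rfl
        have h7 : ((k.castSucc : Fin 5) : ℕ) = (k : ℕ) := rfl
        have h8 := k.isLt
        omega
    calc g x = ∑ k : Fin 4, del x π k * g (ray (Sk π k)) := decomp g a π ha x hx
      _ = ∑ k : Fin 4, del x π k * (∑ M : Finset (Fin 5),
            (if M.Nonempty ∧ M ≠ {0} ∧ M ≠ Finset.univ then -(bcoef v M) else 0)
              * gM M (ray (Sk π k))) := by
          refine Finset.sum_congr rfl fun k _ => ?_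
          rw [hmatch (Sk π k) (hSk k).1 (hSk k).2]
      _ = ∑ k : Fin 4, ∑ M : Finset (Fin 5), del x π k *
            ((if M.Nonempty ∧ M ≠ {0} ∧ M ≠ Finset.univ then -(bcoef v M) else 0)
              * gM M (ray (Sk π k))) := by
          refine Finset.sum_congr rfl fun k _ => ?_
          rw [Finset.mul_sum]
      _ = ∑ M : Finset (Fin 5), ∑ k : Fin 4, del x π k *
            ((if M.Nonempty ∧ M ≠ {0} ∧ M ≠ Finset.univ then -(bcoef v M) else 0)
              * gM M (ray (Sk π k))) := Finset.sum_comm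
      _ = ∑ M : Finset (Fin 5),
            (if M.Nonempty ∧ M ≠ {0} ∧ M ≠ Finset.univ then -(bcoef v M) else 0)
              * gM M x := by
          refine Finset.sum_congr rfl fun M _ => ?_
          by_cases hM : M.Nonempty ∧ M ≠ {0} ∧ M ≠ Finset.univ
          · obtain ⟨a', ha'⟩ := gM_linear M hM.1 π
            rw [decomp (gM M) a' π ha' x hx, Finset.mul_sum]
            exact Finset.sum_congr rfl fun k _ => by ring
          · rw [if_neg hM, zero_mul]
            exact Finset.sum_eq_zero fun k _ => by simp
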